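/- Let A = (Σ, Q, I, F, δ) be a complete NBA. The relation P(⊏^{bw-di-sim}, ⊑^{di}), which compares source states of transitions by strict backward direct simulation and target states by direct trace inclusion, is good for pruning: L(Prune(A, P(⊏^{bw-di-sim}, ⊑^{di}))) = L(A). -/

import Mathlib

/-- A nondeterministic automaton (used both as NBA and NFA):
initial states, accepting states, and a transition relation. -/
structure NA (A : Type*) (Q : Type*) where
  ini : Set Q
  acc : Set Q
  trans : Set (Q × A × Q)

namespace NA

variable {A Q Q₁ Q₂ : Type*}

/-- Forward and backward completeness. -/
def Complete (M : NA A Q) : Prop :=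
  ∀ (p : Q) (a : A), (∃ q, (q, a, p) ∈ M.trans) ∧ (∃ q, (p, a, q) ∈ M.trans)

/-- Infinite run on an infinite word. -/
def InfRun (M : NA A Q) (w : ℕ → A) (π : ℕ → Q) : Prop :=
  ∀ i, (π i, w i, π (i + 1)) ∈ M.trans

/-- Fairness: accepting states are visited infinitely often. -/
def Fair (M : NA A Q) (π : ℕ → Q) : Prop :=
  ∀ n, ∃ m, n ≤ m ∧ π m ∈ M.acc

/-- The ω-language of a Büchi automaton. -/
def BuchiLang (M : NA A Q) : Set (ℕ → A) :=
  {w | ∃ π, π 0 ∈ M.ini ∧ M.InfRun w π ∧ M.Fair π}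

/-- Finite run on a finite word (only the first `w.length + 1` values of `π` matter). -/
def FinRun (M : NA A Q) (w : List A) (π : ℕ → Q) : Prop :=
  ∀ (i : ℕ) (h : i < w.length), (π i, w.get ⟨i, h⟩, π (i + 1)) ∈ M.trans

/-- The finite-word language of an NFA. -/
def FinLang (M : NA A Q) : Set (List A) :=
  {w | ∃ π, π 0 ∈ M.ini ∧ M.FinRun w π ∧ π w.length ∈ M.acc}

/-- Direct (forward) trace inclusion. -/
def DiTraceIncl (M : NA A Q₁) (N : NA A Q₂) (p : Q₁) (q : Q₂) : Prop :=
  ∀ (w : ℕ → A) (π : ℕ → Q₁), π 0 = p → M.InfRun w π →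
    ∃ ρ : ℕ → Q₂, ρ 0 = q ∧ N.InfRun w ρ ∧ ∀ i, π i ∈ M.acc → ρ i ∈ N.acc

/-- Fair trace inclusion. -/
def FairTraceIncl (M : NA A Q₁) (N : NA A Q₂) (p : Q₁) (q : Q₂) : Prop :=
  ∀ (w : ℕ → A) (π : ℕ → Q₁), π 0 = p → M.InfRun w π →
    ∃ ρ : ℕ → Q₂, ρ 0 = q ∧ N.InfRun w ρ ∧ (M.Fair π → N.Fair ρ)

/-- Backward direct trace inclusion. -/
def BwDiTraceIncl (M : NA A Q₁) (N : NA A Q₂) (p : Q₁) (q : Q₂) : Prop :=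
  ∀ (w : List A) (π : ℕ → Q₁), π 0 ∈ M.ini → M.FinRun w π → π w.length = p →
    ∃ ρ : ℕ → Q₂, ρ 0 ∈ N.ini ∧ N.FinRun w ρ ∧ ρ w.length = q ∧
      ∀ i, i ≤ w.length → π i ∈ M.acc → ρ i ∈ N.acc

/-- Forward finite trace inclusion. -/
def FwFinTraceIncl (M : NA A Q₁) (N : NA A Q₂) (p : Q₁) (q : Q₂) : Prop :=
  ∀ (w : List A) (π : ℕ → Q₁), π 0 = p → M.FinRun w π → π w.length ∈ M.acc →
    ∃ ρ : ℕ → Q₂, ρ 0 = q ∧ N.FinRun w ρ ∧ ρ w.length ∈ N.acc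

/-- Backward finite trace inclusion. -/
def BwFinTraceIncl (M : NA A Q₁) (N : NA A Q₂) (p : Q₁) (q : Q₂) : Prop :=
  ∀ (w : List A) (π : ℕ → Q₁), π 0 ∈ M.ini → M.FinRun w π → π w.length = p →
    ∃ ρ : ℕ → Q₂, ρ 0 ∈ N.ini ∧ N.FinRun w ρ ∧ ρ w.length = q

/-- Counting backward trace inclusion: the matching initial trace visits
accepting states at least as often. -/
def CountBwTraceIncl (M : NA A Q) (p q : Q) : Prop :=
  ∀ (w : List A) (π : ℕ → Q), π 0 ∈ M.ini → M.FinRun w π → π w.length = p →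
    ∃ ρ : ℕ → Q, ρ 0 ∈ M.ini ∧ M.FinRun w ρ ∧ ρ w.length = q ∧
      {i | i ≤ w.length ∧ π i ∈ M.acc}.ncard ≤ {i | i ≤ w.length ∧ ρ i ∈ M.acc}.ncard

/-- `R` is a direct forward simulation. -/
def IsDiSim (M : NA A Q₁) (N : NA A Q₂) (R : Q₁ → Q₂ → Prop) : Prop :=
  ∀ p q, R p q → (p ∈ M.acc → q ∈ N.acc) ∧
    ∀ a p', (p, a, p') ∈ M.trans → ∃ q', (q, a, q') ∈ N.trans ∧ R p' q'

/-- Direct forward simulation (the largest direct forward simulation). -/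
def DiSim (M : NA A Q₁) (N : NA A Q₂) (p : Q₁) (q : Q₂) : Prop :=
  ∃ R, IsDiSim M N R ∧ R p q

/-- `R` is a backward direct simulation (matching accepting and initial states). -/
def IsBwDiSim (M : NA A Q₁) (N : NA A Q₂) (R : Q₁ → Q₂ → Prop) : Prop :=
  ∀ p q, R p q → (p ∈ M.acc → q ∈ N.acc) ∧ (p ∈ M.ini → q ∈ N.ini) ∧
    ∀ a p', (p', a, p) ∈ M.trans → ∃ q', (q', a, q) ∈ N.trans ∧ R p' q'

/-- Backward direct simulation (the largest backward direct simulation). -/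
def BwDiSim (M : NA A Q₁) (N : NA A Q₂) (p : Q₁) (q : Q₂) : Prop :=
  ∃ R, IsBwDiSim M N R ∧ R p q

/-- `R` is a backward finite-word simulation (matching only initial states). -/
def IsBwSim (M : NA A Q₁) (N : NA A Q₂) (R : Q₁ → Q₂ → Prop) : Prop :=
  ∀ p q, R p q → (p ∈ M.ini → q ∈ N.ini) ∧
    ∀ a p', (p', a, p) ∈ M.trans → ∃ q', (q', a, q) ∈ N.trans ∧ R p' q'

/-- Backward finite-word simulation (the largest backward finite-word simulation). -/
def BwSim (M : NA A Q₁) (N : NA A Q₂) (p : Q₁) (q : Q₂) : Prop :=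
  ∃ R, IsBwSim M N R ∧ R p q

/-- Strict version of a relation: `x ⊏ y` iff `x ⊑ y` and not `y ⊑ x`. -/
def StrictRel (R : Q₁ → Q₁ → Prop) (x y : Q₁) : Prop := R x y ∧ ¬ R y x

/-- Comparing two transitions endpoint-wise; they must carry the same symbol. -/
def PairRel (Rb Rf : Q₁ → Q₂ → Prop) (t : Q₁ × A × Q₁) (t' : Q₂ × A × Q₂) : Prop :=
  t.2.1 = t'.2.1 ∧ Rb t.1 t'.1 ∧ Rf t.2.2 t'.2.2

/-- Pruned automaton: keep the transitions that are maximal w.r.t. `P`. -/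
def prune (M : NA A Q) (P : (Q × A × Q) → (Q × A × Q) → Prop) : NA A Q :=
  ⟨M.ini, M.acc, {t | t ∈ M.trans ∧ ¬ ∃ t' ∈ M.trans, P t t'}⟩

/-- Cross-pruned automaton: remove transitions of `M` subsumed by transitions of `N`. -/
def pruneAB (M : NA A Q₁) (N : NA A Q₂) (P : (Q₁ × A × Q₁) → (Q₂ × A × Q₂) → Prop) :
    NA A Q₁ :=
  ⟨M.ini, M.acc, {t | t ∈ M.trans ∧ ¬ ∃ t' ∈ N.trans, P t t'}⟩

/-- Saturated automaton: add every transition `S`-below an existing transition. -/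
def saturate (M : NA A Q) (S : (Q × A × Q) → (Q × A × Q) → Prop) : NA A Q :=
  ⟨M.ini, M.acc, {t | ∃ t' ∈ M.trans, S t t'}⟩

/-- A transition is transient if it occurs at most once in every trace. -/
def Transient (M : NA A Q) (t : Q × A × Q) : Prop :=
  ∀ (w : ℕ → A) (π : ℕ → Q), M.InfRun w π →
    ∀ i j, (π i, w i, π (i + 1)) = t → (π j, w j, π (j + 1)) = t → i = j

/-- Equivalence class of `q` w.r.t. the equivalence induced by the preorder `R`. -/
def cls (R : Q → Q → Prop) (q : Q) : Set Q := {x | R q x ∧ R x q}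

/-- Quotient automaton by the preorder `R`; equivalence classes are modeled as
the corresponding subsets of `Q`. -/
def quot (M : NA A Q) (R : Q → Q → Prop) : NA A (Set Q) :=
  ⟨{c | ∃ q ∈ M.ini, c = cls R q},
   {c | ∃ q ∈ M.acc, c = cls R q},
   {t | ∃ q₁ q₂, t.1 = cls R q₁ ∧ t.2.2 = cls R q₂ ∧ (q₁, t.2.1, q₂) ∈ M.trans}⟩

/-- `R`-jumping run: before each transition, jump to an `R`-larger state. -/
def JumpRun (M : NA A Q) (R : Q → Q → Prop) (w : ℕ → A) (π π' : ℕ → Q) : Prop :=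
  ∀ i, R (π i) (π' i) ∧ (π' i, w i, π (i + 1)) ∈ M.trans

/-- A jumping run is fair if it is accepting at infinitely many steps. -/
def JumpFair (M : NA A Q) (R : Q → Q → Prop) (π π' : ℕ → Q) : Prop :=
  ∀ n, ∃ m, n ≤ m ∧ ∃ q'' ∈ M.acc, R (π m) q'' ∧ R q'' (π' m)

end NA

-- ===== auxiliary lemmas =====
namespace NA

variable {A Q : Type*}

lemma bwDiSim_isBwDiSim (M : NA A Q) : IsBwDiSim M M (M.BwDiSim M) := by
  rintro p q ⟨R, hR, hpq⟩
  obtain ⟨hacc, hini, hstep⟩ := hR p q hpq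
  refine ⟨hacc, hini, fun a p' ht => ?_⟩
  obtain ⟨q', hq', hR'⟩ := hstep a p' ht
  exact ⟨q', hq', R, hR, hR'⟩

lemma bwDiSim_refl (M : NA A Q) (p : Q) : M.BwDiSim M p p :=
  ⟨Eq, fun x y hxy => by subst hxy; exact ⟨id, id, fun a p' ht => ⟨p', ht, rfl⟩⟩, rfl⟩

lemma bwDiSim_trans (M : NA A Q) {p q r : Q} (h1 : M.BwDiSim M p q) (h2 : M.BwDiSim M q r) :
    M.BwDiSim M p r := by
  refine ⟨fun x z => ∃ y, M.BwDiSim M x y ∧ M.BwDiSim M y z, ?_, q, h1, h2⟩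
  rintro x z ⟨y, hxy, hyz⟩
  obtain ⟨haccxy, hinixy, hstepxy⟩ := bwDiSim_isBwDiSim M x y hxy
  obtain ⟨haccyz, hiniyz, hstepyz⟩ := bwDiSim_isBwDiSim M y z hyz
  refine ⟨fun h => haccyz (haccxy h), fun h => hiniyz (hinixy h), fun a x' ht => ?_⟩
  obtain ⟨y', hty, hxy'⟩ := hstepxy a x' ht
  obtain ⟨z', htz, hyz'⟩ := hstepyz a y' hty
  exact ⟨z', htz, y', hxy', hyz'⟩

/-- Lifting a finite run prefix backwards along `BwDiSim`. -/
lemma bw_prefix (M : NA A Q) (w : ℕ → A) :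
    ∀ (j : ℕ) (ρ : ℕ → Q) (q : Q), (∀ i < j, (ρ i, w i, ρ (i+1)) ∈ M.trans) →
      M.BwDiSim M (ρ j) q →
      ∃ σ : ℕ → Q, σ j = q ∧ (∀ i < j, (σ i, w i, σ (i+1)) ∈ M.trans) ∧
        ∀ i ≤ j, M.BwDiSim M (ρ i) (σ i) := by
  intro j
  induction j with
  | zero =>
    intro ρ q _ hq
    exact ⟨fun _ => q, rfl, fun i hi => absurd hi (Nat.not_lt_zero i),
      fun i hi => by interval_cases i; exact hq⟩
  | succ j ih =>
    intro ρ q hrun hq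
    obtain ⟨-, -, hstep⟩ := bwDiSim_isBwDiSim M _ _ hq
    obtain ⟨q', htq, hq'⟩ := hstep (w j) (ρ j) (hrun j (Nat.lt_succ_self j))
    obtain ⟨σ', hσj, hσrun, hσsim⟩ := ih ρ q' (fun i hi => hrun i (hi.trans (Nat.lt_succ_self j))) hq'
    refine ⟨fun i => if i ≤ j then σ' i else q, by simp, ?_, ?_⟩
    · intro i hi
      rcases Nat.lt_succ_iff_lt_or_eq.mp hi with hi' | rfl
      · simpa [Nat.le_of_lt hi', Nat.succ_le_of_lt hi'] using hσrun i hi'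
      · simpa [hσj] using htq
    · intro i hi
      rcases Nat.lt_succ_iff_lt_or_eq.mp (Nat.lt_succ_of_le hi) with hi' | rfl
      · simpa [Nat.le_of_lt_succ (Nat.lt_succ_of_lt hi'), Nat.le_of_lt_succ hi'] using
          hσsim i (Nat.le_of_lt_succ hi')
      · simp [Nat.lt_irrefl, hq]
      
/-- The replacement step: replace a pruned transition by a dominating one. -/
lemma replace_step (M : NA A Q) (w : ℕ → A) (ρ : ℕ → Q) (hρI : ρ 0 ∈ M.ini)
    (hρrun : M.InfRun w ρ) (j : ℕ) (t' : Q × A × Q) (ht' : t' ∈ M.trans)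
    (hP : PairRel (StrictRel (M.BwDiSim M)) (M.DiTraceIncl M) (ρ j, w j, ρ (j+1)) t') :
    ∃ ρ' : ℕ → Q, ρ' 0 ∈ M.ini ∧ M.InfRun w ρ' ∧ (∀ i, ρ i ∈ M.acc → ρ' i ∈ M.acc) ∧
      (∀ i < j, M.BwDiSim M (ρ i) (ρ' i)) ∧ StrictRel (M.BwDiSim M) (ρ j) (ρ' j) := by
  obtain ⟨hsym, hb, hf⟩ := hP
  obtain ⟨p', a, r'⟩ := t'
  simp only at hsym hb hf
  subst hsym
  -- prefix
  obtain ⟨σ, hσj, hσrun, hσsim⟩ := bw_prefix M w j ρ p' (fun i _ => hρrun i) hb.1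
  -- suffix
  obtain ⟨τ, hτ0, hτrun, hτacc⟩ := hf (fun i => w (j+1+i)) (fun i => ρ (j+1+i)) rfl
    (fun i => by have := hρrun (j+1+i); simpa [Nat.add_assoc] using this)
  refine ⟨fun i => if i ≤ j then σ i else τ (i - (j+1)), ?_, ?_, ?_, ?_, ?_⟩
  · simpa using (bwDiSim_isBwDiSim M _ _ (hσsim 0 (Nat.zero_le j))).2.1 hρI
  · intro i
    rcases lt_trichotomy i j with hi | rfl | hi
    · simpa [Nat.le_of_lt hi, Nat.succ_le_of_lt hi] using hσrun i hi
    · have : ¬ (i + 1 ≤ i) := by omega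
      simpa [this, hσj, Nat.sub_self, hτ0] using ht'
    · have h1 : ¬ (i ≤ j) := by omega
      have h2 : ¬ (i + 1 ≤ j) := by omega
      have := hτrun (i - (j+1))
      have e1 : j + 1 + (i - (j + 1)) = i := by omega
      have e2 : i - (j+1) + 1 = i + 1 - (j+1) := by omega
      simp only [e1, e2] at this
      simpa [h1, h2] using this
  · intro i hacc
    rcases le_or_gt i j with hi | hi
    · simpa [hi] using (bwDiSim_isBwDiSim M _ _ (hσsim i hi)).1 hacc
    · have h1 : ¬ (i ≤ j) := by omega
      have e1 : j + 1 + (i - (j + 1)) = i := by omega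
      have := hτacc (i - (j+1)) (by simpa [e1] using hacc)
      simpa [h1] using this
  · intro i hi
    simpa [Nat.le_of_lt hi] using hσsim i (Nat.le_of_lt hi)
  · simpa [hσj] using hb

end NA
namespace NA

variable {A Q : Type*}

/-- Height of a state w.r.t. backward direct simulation. -/
noncomputable def hgt (M : NA A Q) (q : Q) : ℕ := {x | M.BwDiSim M x q}.ncard

lemma hgt_mono (M : NA A Q) [Finite Q] {p q : Q} (h : M.BwDiSim M p q) :
    M.hgt p ≤ M.hgt q :=
  Set.ncard_le_ncard (fun x hx => bwDiSim_trans M hx h) (Set.toFinite _)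

lemma hgt_strict (M : NA A Q) [Finite Q] {p q : Q} (h : StrictRel (M.BwDiSim M) p q) :
    M.hgt p < M.hgt q := by
  apply Set.ncard_lt_ncard _ (Set.toFinite _)
  constructor
  · exact fun x hx => bwDiSim_trans M hx h.1
  · intro hsub
    exact h.2 (hsub (bwDiSim_refl M q))

lemma hgt_le_card (M : NA A Q) [Fintype Q] (q : Q) : M.hgt q ≤ Fintype.card Q := by
  have := Set.ncard_le_ncard (Set.subset_univ {x | M.BwDiSim M x q}) Set.finite_univ
  simpa [hgt, Set.ncard_univ, Nat.card_eq_fintype_card] using this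

lemma geo_sum (C : ℕ) : ∀ d, 1 + ∑ i ∈ Finset.range d, C * (C+1)^i = (C+1)^d
  | 0 => by simp
  | (d+1) => by
    rw [Finset.sum_range_succ, ← add_assoc, geo_sum C d]; ring

/-- Weighted measure of the first `n+1` states of a run. -/
noncomputable def meas (M : NA A Q) [Fintype Q] (n : ℕ) (ρ : ℕ → Q) : ℕ :=
  ∑ i ∈ Finset.range (n+1), M.hgt (ρ i) * (Fintype.card Q + 1)^(n - i)

lemma meas_le (M : NA A Q) [Fintype Q] (n : ℕ) (ρ : ℕ → Q) :
    M.meas n ρ ≤ ∑ i ∈ Finset.range (n+1), Fintype.card Q * (Fintype.card Q + 1)^(n - i) :=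
  Finset.sum_le_sum fun i _ => Nat.mul_le_mul_right _ (hgt_le_card M _)

lemma meas_lt (M : NA A Q) [Fintype Q] {n j : ℕ} (hj : j ≤ n) {ρ ρ' : ℕ → Q}
    (hw : ∀ i < j, M.hgt (ρ i) ≤ M.hgt (ρ' i)) (hs : M.hgt (ρ j) < M.hgt (ρ' j)) :
    M.meas n ρ < M.meas n ρ' := by
  set C := Fintype.card Q with hC
  set B := C + 1 with hB
  set f : ℕ → ℕ := fun i => M.hgt (ρ i) * B^(n - i) with hf
  set f' : ℕ → ℕ := fun i => M.hgt (ρ' i) * B^(n - i) with hf'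
  have hsplit : ∀ g : ℕ → ℕ, ∑ i ∈ Finset.range (n+1), g i
      = (∑ i ∈ Finset.Ico 0 j, g i) + g j + ∑ i ∈ Finset.Ico (j+1) (n+1), g i := by
    intro g
    rw [Finset.range_eq_Ico,
      ← Finset.sum_Ico_consecutive g (Nat.zero_le (j+1)) (by omega),
      Finset.sum_Ico_succ_top (Nat.zero_le j)]
  -- tail bound
  have htail : ∑ i ∈ Finset.Ico (j+1) (n+1), f i < B^(n - j) := by
    have h1 : ∑ i ∈ Finset.Ico (j+1) (n+1), f i
        ≤ ∑ i ∈ Finset.Ico (j+1) (n+1), C * B^(n - i) :=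
      Finset.sum_le_sum fun i _ => Nat.mul_le_mul_right _ (hgt_le_card M _)
    have h2 : ∑ i ∈ Finset.Ico (j+1) (n+1), C * B^(n - i)
        = ∑ i ∈ Finset.range (n - j), C * B^(n - j - 1 - i) := by
      rw [Finset.sum_Ico_eq_sum_range]
      have hr : n + 1 - (j + 1) = n - j := by omega
      rw [hr]
      apply Finset.sum_congr rfl
      intro i _
      have he : n - (j + 1 + i) = n - j - 1 - i := by omega
      rw [he]
    have h3 : ∑ i ∈ Finset.range (n - j), C * B^(n - j - 1 - i)
        = ∑ i ∈ Finset.range (n - j), C * B^i :=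
      Finset.sum_range_reflect (fun i => C * B^i) (n - j)
    have h4 := geo_sum C (n - j)
    rw [← hB] at h4
    calc ∑ i ∈ Finset.Ico (j+1) (n+1), f i ≤ ∑ i ∈ Finset.range (n - j), C * B^i := by
          rw [← h3, ← h2]; exact h1
      _ < B^(n - j) := by omega
  have hhead : ∑ i ∈ Finset.Ico 0 j, f i ≤ ∑ i ∈ Finset.Ico 0 j, f' i :=
    Finset.sum_le_sum fun i hi =>
      Nat.mul_le_mul_right _ (hw i (Finset.mem_Ico.mp hi).2)
  have hjterm : f j + B^(n - j) ≤ f' j := by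
    have : (M.hgt (ρ j) + 1) * B^(n - j) ≤ M.hgt (ρ' j) * B^(n - j) :=
      Nat.mul_le_mul_right _ hs
    calc f j + B^(n-j) = (M.hgt (ρ j) + 1) * B^(n - j) := by rw [hf]; ring
      _ ≤ M.hgt (ρ' j) * B^(n - j) := this
      _ = f' j := rfl
  have e1 : M.meas n ρ = (∑ i ∈ Finset.Ico 0 j, f i) + f j + ∑ i ∈ Finset.Ico (j+1) (n+1), f i :=
    hsplit f
  have e2 : M.meas n ρ' = (∑ i ∈ Finset.Ico 0 j, f' i) + f' j + ∑ i ∈ Finset.Ico (j+1) (n+1), f' i :=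
    hsplit f'
  omega

end NA
namespace NA

variable {A Q : Type*}

lemma exists_good (M : NA A Q) [Fintype Q] (w : ℕ → A) (π : ℕ → Q) (n : ℕ) :
    ∀ (k : ℕ) (ρ : ℕ → Q), ρ 0 ∈ M.ini → M.InfRun w ρ → (∀ i, π i ∈ M.acc → ρ i ∈ M.acc) →
      (∑ i ∈ Finset.range (n+1), Fintype.card Q * (Fintype.card Q + 1)^(n - i))
        < M.meas n ρ + k →
      ∃ ρ' : ℕ → Q, ρ' 0 ∈ M.ini ∧ M.InfRun w ρ' ∧ (∀ i, π i ∈ M.acc → ρ' i ∈ M.acc) ∧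
        ∀ i < n, ¬ ∃ t' ∈ M.trans,
          PairRel (StrictRel (M.BwDiSim M)) (M.DiTraceIncl M) (ρ' i, w i, ρ' (i+1)) t' := by
  intro k
  induction k with
  | zero =>
    intro ρ _ _ _ hb
    exact absurd hb (by have := M.meas_le n ρ; omega)
  | succ k ih =>
    intro ρ hI hrun hacc hb
    by_cases hgood : ∀ i < n, ¬ ∃ t' ∈ M.trans,
        PairRel (StrictRel (M.BwDiSim M)) (M.DiTraceIncl M) (ρ i, w i, ρ (i+1)) t'
    · exact ⟨ρ, hI, hrun, hacc, hgood⟩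
    · push_neg at hgood
      obtain ⟨j, hj, t', ht', hP⟩ := hgood
      obtain ⟨ρ', hI', hrun', hacc', hweak, hstrict⟩ := replace_step M w ρ hI hrun j t' ht' hP
      have hm : M.meas n ρ < M.meas n ρ' :=
        meas_lt M (le_of_lt hj) (fun i hi => hgt_mono M (hweak i hi)) (hgt_strict M hstrict)
      exact ih ρ' hI' hrun' (fun i h => hacc' i (hacc i h)) (by omega)

end NA
/-- `P(⊏ᵇʷ⁻ᵈⁱ⁻ˢⁱᵐ, ⊑ᵈⁱ)` (strict backward direct simulation on
sources, direct trace inclusion on targets) is good for pruning on complete NBAs. -/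
theorem prune_strictBwDiSim_diTraceIncl_gfp
    {A Q : Type*} [Fintype A] [Fintype Q] (M : NA A Q) (hM : M.Complete) :
    (M.prune (NA.PairRel (NA.StrictRel (M.BwDiSim M)) (M.DiTraceIncl M))).BuchiLang
      = M.BuchiLang := by
  apply Set.eq_of_subset_of_subset
  · rintro w ⟨ρ, hI, hrun, hfair⟩
    exact ⟨ρ, hI, fun i => (hrun i).1, hfair⟩
  · rintro w ⟨π, hI, hrun, hfair⟩
    letI : TopologicalSpace Q := ⊥
    haveI : DiscreteTopology Q := ⟨rfl⟩
    set Bad : Q × A × Q → Prop := fun t => ∃ t' ∈ M.trans,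
      NA.PairRel (NA.StrictRel (M.BwDiSim M)) (M.DiTraceIncl M) t t' with hBad
    set S : ℕ → Set (ℕ → Q) := fun n =>
      ((fun ρ : ℕ → Q => ρ 0) ⁻¹' M.ini) ∩
      (⋂ i : ℕ, (fun ρ : ℕ → Q => (ρ i, ρ (i+1))) ⁻¹' {p : Q × Q | (p.1, w i, p.2) ∈ M.trans}) ∩
      (⋂ i : ℕ, (fun ρ : ℕ → Q => ρ i) ⁻¹' {q : Q | π i ∈ M.acc → q ∈ M.acc}) ∩
      (⋂ i : ℕ, (fun ρ : ℕ → Q => (ρ i, ρ (i+1))) ⁻¹'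
        {p : Q × Q | i < n → ¬ Bad (p.1, w i, p.2)}) with hS
    have hmem : ∀ n (ρ : ℕ → Q), ρ ∈ S n ↔
        (ρ 0 ∈ M.ini ∧ M.InfRun w ρ ∧ (∀ i, π i ∈ M.acc → ρ i ∈ M.acc) ∧
          ∀ i < n, ¬ Bad (ρ i, w i, ρ (i+1))) := by
      intro n ρ
      simp only [hS, Set.mem_inter_iff, Set.mem_iInter, Set.mem_preimage, Set.mem_setOf_eq]
      constructor
      · rintro ⟨⟨⟨h1, h2⟩, h3⟩, h4⟩
        exact ⟨h1, h2, h3, h4⟩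
      · rintro ⟨h1, h2, h3, h4⟩
        exact ⟨⟨⟨h1, h2⟩, h3⟩, h4⟩
    have hmono : ∀ n, S (n+1) ⊆ S n := by
      intro n ρ hρ
      rw [hmem] at hρ ⊢
      exact ⟨hρ.1, hρ.2.1, hρ.2.2.1, fun i hi => hρ.2.2.2 i (by omega)⟩
    have hne : ∀ n, (S n).Nonempty := by
      intro n
      obtain ⟨ρ', h1, h2, h3, h4⟩ := NA.exists_good M w π n
        ((∑ i ∈ Finset.range (n+1), Fintype.card Q * (Fintype.card Q + 1)^(n - i)) + 1)
        π hI hrun (fun _ h => h) (by omega)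
      exact ⟨ρ', (hmem n ρ').mpr ⟨h1, h2, h3, h4⟩⟩
    have hclosed : ∀ n, IsClosed (S n) := by
      intro n
      refine (((IsClosed.preimage (continuous_apply 0) (isClosed_discrete _)).inter
        (isClosed_iInter fun i => IsClosed.preimage
          ((continuous_apply i).prodMk (continuous_apply (i+1))) (isClosed_discrete _))).inter
        (isClosed_iInter fun i => IsClosed.preimage (continuous_apply i)
          (isClosed_discrete _))).inter
        (isClosed_iInter fun i => IsClosed.preimage
          ((continuous_apply i).prodMk (continuous_apply (i+1))) (isClosed_discrete _))
    obtain ⟨ρ, hρ⟩ := IsCompact.nonempty_iInter_of_sequence_nonempty_isCompact_isClosed S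
      hmono hne ((hclosed 0).isCompact) hclosed
    rw [Set.mem_iInter] at hρ
    have hρ' := fun n => (hmem n ρ).mp (hρ n)
    refine ⟨ρ, (hρ' 0).1, ?_, ?_⟩
    · intro i
      exact ⟨(hρ' 0).2.1 i, (hρ' (i+1)).2.2.2 i (Nat.lt_succ_self i)⟩
    · intro n
      obtain ⟨m, hm, hacc⟩ := hfair n
      exact ⟨m, hm, (hρ' 0).2.2.1 m hacc⟩
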